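/- Let k = 2^{a₁} + 2^{a₂} ∈ N₂∖N₁ with a₁ > a₂ ≥ 0, and let ℓ ∈ {0, 1, …, 2^{a₂}−1}. Then for every x ∈ [0,1): wal_{k+ℓ}(x) = 2^{−a₂/2} · wal_ℓ(x) · Σ_{m=0}^{2^{a₂}−1} w_{k,m,2}(x) = 2^{−a₂/2} · Σ_{m=0}^{2^{a₂}−1} wal_ℓ(m/2^{a₂}) · w_{k,m,2}(x). -/

import Mathlib

open scoped Classical
open MeasureTheory

noncomputable section

/-- The binary digit `ξ_{i+1}` of `x ∈ [0,1)`. -/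
def rdigit (x : ℝ) (i : ℕ) : ℕ := (⌊x * 2 ^ (i + 1)⌋).toNat % 2

/-- The `k`-th Walsh function in base `2`. -/
def walsh (k : ℕ) (x : ℝ) : ℝ :=
  (-1 : ℝ) ^ ∑ i ∈ Finset.range (Nat.size k), (Nat.testBit k i).toNat * rdigit x i

/-- The order-2 localized Walsh function `w_{k,m,2}` for `k = 2^{a₁} + 2^{a₂} ∈ N₂∖N₁`
(with `a₁ > a₂ ≥ 0`) and `m ∈ L_{k,2}`. -/
def locw (a₁ a₂ m : ℕ) (x : ℝ) : ℝ :=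
  Real.sqrt (2 ^ a₂) *
    Set.indicator (Set.Ico ((m : ℝ) / 2 ^ a₂) (((m : ℝ) + 1) / 2 ^ a₂)) (fun _ => (1:ℝ)) x *
    walsh (2 ^ a₁ + 2 ^ a₂) x

lemma walsh_eq_of_size_le (k : ℕ) (x : ℝ) {n : ℕ} (hn : Nat.size k ≤ n) :
    walsh k x = (-1 : ℝ) ^ ∑ i ∈ Finset.range n, (Nat.testBit k i).toNat * rdigit x i := by
  unfold walsh
  congr 1
  refine Finset.sum_subset (Finset.range_subset_range.mpr hn) ?_
  intro i _ hi
  simp only [Finset.mem_range, not_lt] at hi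
  rw [Nat.testBit_lt_two_pow (Nat.size_le.mp hi)]
  simp

lemma testBit_split (a₁ a₂ ℓ : ℕ) (h : a₂ < a₁) (hℓ : ℓ < 2 ^ a₂) (j : ℕ) :
    ((2 ^ a₁ + 2 ^ a₂ + ℓ).testBit j).toNat
      = ((2 ^ a₁ + 2 ^ a₂).testBit j).toNat + (ℓ.testBit j).toNat := by
  have hk : 2 ^ a₁ + 2 ^ a₂ = 2 ^ a₂ * (2 ^ (a₁ - a₂) + 1) := by
    rw [Nat.mul_add, Nat.mul_one, ← pow_add]
    congr 2
    omega
  rw [hk]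
  have h1 := Nat.testBit_two_pow_mul_add (2 ^ (a₁ - a₂) + 1) hℓ j
  have h2 := Nat.testBit_two_pow_mul_add (2 ^ (a₁ - a₂) + 1) (Nat.two_pow_pos a₂) j
  rw [Nat.add_zero] at h2
  rw [h1, h2]
  by_cases hj : j < a₂
  · simp [hj, Nat.testBit_lt_two_pow (show (0:ℕ) < 2 ^ j from Nat.two_pow_pos j)]
  · have : ℓ.testBit j = false :=
      Nat.testBit_lt_two_pow (lt_of_lt_of_le hℓ (Nat.pow_le_pow_right (by norm_num) (by omega)))
    simp [hj, this]

lemma walsh_mul (a₁ a₂ ℓ : ℕ) (h : a₂ < a₁) (hℓ : ℓ < 2 ^ a₂) (x : ℝ) :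
    walsh (2 ^ a₁ + 2 ^ a₂ + ℓ) x = walsh (2 ^ a₁ + 2 ^ a₂) x * walsh ℓ x := by
  set n := max (Nat.size (2 ^ a₁ + 2 ^ a₂ + ℓ)) (max (Nat.size (2 ^ a₁ + 2 ^ a₂)) (Nat.size ℓ))
    with hn
  rw [walsh_eq_of_size_le _ x (le_max_left _ _ : _ ≤ n),
    walsh_eq_of_size_le (2 ^ a₁ + 2 ^ a₂) x ((le_max_left _ _).trans (le_max_right _ _) : _ ≤ n),
    walsh_eq_of_size_le ℓ x ((le_max_right _ _).trans (le_max_right _ _) : _ ≤ n),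
    ← pow_add, ← Finset.sum_add_distrib]
  congr 1
  refine Finset.sum_congr rfl fun i _ => ?_
  rw [testBit_split a₁ a₂ ℓ h hℓ i, Nat.add_mul]

lemma rdigit_floor (x : ℝ) (hx : 0 ≤ x) (a₂ i : ℕ) (hi : i < a₂) :
    rdigit ((⌊x * 2 ^ a₂⌋₊ : ℝ) / 2 ^ a₂) i = rdigit x i := by
  unfold rdigit
  rw [Int.floor_toNat, Int.floor_toNat]
  have h1 : (⌊x * 2 ^ a₂⌋₊ : ℝ) / 2 ^ a₂ * 2 ^ (i + 1)
      = ((⌊x * 2 ^ a₂⌋₊ * 2 ^ (i + 1) : ℕ) : ℝ) / ((2 ^ a₂ : ℕ) : ℝ) := by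
    push_cast
    ring
  have h2 : x * 2 ^ (i + 1) = (x * 2 ^ a₂) / ((2 ^ (a₂ - (i + 1)) : ℕ) : ℝ) := by
    rw [eq_div_iff (by positivity)]
    push_cast
    rw [mul_assoc, ← pow_add]
    congr 2
    omega
  rw [h1, Nat.floor_div_natCast, Nat.floor_natCast, h2, Nat.floor_div_natCast]
  congr 1
  have hsplit : 2 ^ a₂ = 2 ^ (i + 1) * 2 ^ (a₂ - (i + 1)) := by
    rw [← pow_add]
    congr 1
    omega
  rw [hsplit, ← Nat.div_div_eq_div_mul, Nat.mul_div_cancel _ (Nat.two_pow_pos (i + 1))]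

lemma walsh_floor (ℓ a₂ : ℕ) (hℓ : ℓ < 2 ^ a₂) (x : ℝ) (hx : 0 ≤ x) :
    walsh ℓ ((⌊x * 2 ^ a₂⌋₊ : ℝ) / 2 ^ a₂) = walsh ℓ x := by
  unfold walsh
  congr 1
  refine Finset.sum_congr rfl fun i hi => ?_
  have hi' : i < a₂ := lt_of_lt_of_le (Finset.mem_range.mp hi) (Nat.size_le.mpr hℓ)
  rw [rdigit_floor x hx a₂ i hi']

theorem stmt1 (a₁ a₂ ℓ : ℕ) (h : a₂ < a₁) (hℓ : ℓ < 2 ^ a₂) :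
    ∀ x ∈ Set.Ico (0 : ℝ) 1,
      walsh (2 ^ a₁ + 2 ^ a₂ + ℓ) x
          = 1 / Real.sqrt (2 ^ a₂) * walsh ℓ x * ∑ m ∈ Finset.range (2 ^ a₂), locw a₁ a₂ m x ∧
        walsh (2 ^ a₁ + 2 ^ a₂ + ℓ) x
          = 1 / Real.sqrt (2 ^ a₂) *
              ∑ m ∈ Finset.range (2 ^ a₂), walsh ℓ ((m : ℝ) / 2 ^ a₂) * locw a₁ a₂ m x := by
  intro x hx
  obtain ⟨hx0, hx1⟩ := hx
  set M : ℕ := ⌊x * 2 ^ a₂⌋₊ with hM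
  have hpow : (0 : ℝ) < 2 ^ a₂ := by positivity
  have hxm : 0 ≤ x * 2 ^ a₂ := by positivity
  have hMlt : M < 2 ^ a₂ := by
    rw [hM]
    have : x * 2 ^ a₂ < ((2 ^ a₂ : ℕ) : ℝ) := by
      push_cast
      nlinarith
    exact Nat.floor_lt hxm |>.mpr this
  have hmemx : x ∈ Set.Ico ((M : ℝ) / 2 ^ a₂) (((M : ℝ) + 1) / 2 ^ a₂) := by
    constructor
    · rw [div_le_iff₀ hpow]
      exact Nat.floor_le hxm
    · rw [lt_div_iff₀ hpow]
      exact Nat.lt_floor_add_one _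
  have huniq : ∀ m : ℕ, x ∈ Set.Ico ((m : ℝ) / 2 ^ a₂) (((m : ℝ) + 1) / 2 ^ a₂) → m = M := by
    intro m hm
    obtain ⟨hm1, hm2⟩ := hm
    rw [div_le_iff₀ hpow] at hm1
    rw [lt_div_iff₀ hpow] at hm2
    symm
    rw [hM, Nat.floor_eq_iff hxm]
    push_cast
    constructor <;> nlinarith
  have hsum : ∀ (c : ℕ → ℝ), ∑ m ∈ Finset.range (2 ^ a₂), c m * locw a₁ a₂ m x
      = c M * (Real.sqrt (2 ^ a₂) * walsh (2 ^ a₁ + 2 ^ a₂) x) := by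
    intro c
    rw [Finset.sum_eq_single_of_mem M (Finset.mem_range.mpr hMlt)]
    · unfold locw
      rw [Set.indicator_of_mem hmemx]
      ring
    · intro m _ hmM
      have : x ∉ Set.Ico ((m : ℝ) / 2 ^ a₂) (((m : ℝ) + 1) / 2 ^ a₂) := fun hc => hmM (huniq m hc)
      unfold locw
      rw [Set.indicator_of_notMem this]
      ring
  have hs : Real.sqrt (2 ^ a₂) ≠ 0 := by positivity
  have hmul := walsh_mul a₁ a₂ ℓ h hℓ x
  constructor
  · have := hsum (fun _ => 1)
    simp only [one_mul] at this
    rw [this, hmul]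
    field_simp
  · rw [hsum (fun m => walsh ℓ ((m : ℝ) / 2 ^ a₂)), walsh_floor ℓ a₂ hℓ x hx0, hmul]
    field_simp

end
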